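/- Let (M, Σ, μ) be a measure space, α a measurable space, R : α → ℝ a measurable function admitting a global minimum, with c := the minimal value of R (so R(u) ≥ c for all u, and R(u*) = c for some u*). Let F be a set of measurable functions f : M → α. For a probability measure P on M, define the expected loss of f under P as the Lebesgue integral ∫⁻ ENNReal.ofReal(R(f(x)) − c) dP(x) (valued in [0,∞]), and let S_P denote the set of f ∈ F whose expected loss under P is minimal among all elements of F. Suppose there exists f₀ ∈ F with R(f₀(x)) = c for μ-almost every x. Then for any two probability measures P and Q on M, each mutually absolutely continuous with μ (P ≪ μ, μ ≪ P, Q ≪ μ, μ ≪ Q), one has S_P = S_Q; that is, the set of minimizers is independent of the probability measure. -/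

import Mathlib

open MeasureTheory

/-- **admissibility.** Let `R : α → ℝ` be measurable with global minimum
value `c`, `F` a set of measurable functions `M → α`, and suppose some `f₀ ∈ F` satisfies
`R (f₀ x) = c` for `μ`-a.e. `x`.  Then for any two probability measures `P`, `Q` each
mutually absolutely continuous with `μ`, the set of minimizers in `F` of the expected loss
`∫⁻ ENNReal.ofReal (R (f x) - c) ∂P` coincides with that for `Q`. -/
theorem minimizer_set_independent_of_measure
    {M α : Type*} [MeasurableSpace M] [MeasurableSpace α]
    (μ : Measure M) (R : α → ℝ) (hR : Measurable R) (c : ℝ)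
    (hc : ∀ u : α, c ≤ R u) (hmin : ∃ u : α, R u = c)
    (F : Set (M → α)) (hF : ∀ f ∈ F, Measurable f)
    (hf₀ : ∃ f₀ ∈ F, ∀ᵐ x ∂μ, R (f₀ x) = c)
    (P Q : Measure M) [IsProbabilityMeasure P] [IsProbabilityMeasure Q]
    (hPμ : P ≪ μ) (hμP : μ ≪ P) (hQμ : Q ≪ μ) (hμQ : μ ≪ Q) :
    {f ∈ F | ∀ g ∈ F,
        ∫⁻ x, ENNReal.ofReal (R (f x) - c) ∂P ≤ ∫⁻ x, ENNReal.ofReal (R (g x) - c) ∂P} =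
    {f ∈ F | ∀ g ∈ F,
        ∫⁻ x, ENNReal.ofReal (R (f x) - c) ∂Q ≤ ∫⁻ x, ENNReal.ofReal (R (g x) - c) ∂Q} := by
  obtain ⟨f₀, hf₀F, hf₀c⟩ := hf₀
  have key : ∀ (ν : Measure M), ν ≪ μ → μ ≪ ν →
      {f ∈ F | ∀ g ∈ F,
        ∫⁻ x, ENNReal.ofReal (R (f x) - c) ∂ν ≤ ∫⁻ x, ENNReal.ofReal (R (g x) - c) ∂ν}
      = {f ∈ F | ∀ᵐ x ∂μ, R (f x) = c} := by
    intro ν hνμ hμν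
    have hzero : ∫⁻ x, ENNReal.ofReal (R (f₀ x) - c) ∂ν = 0 := by
      have h : ∀ᵐ x ∂ν, ENNReal.ofReal (R (f₀ x) - c) = 0 := by
        filter_upwards [hνμ.ae_le hf₀c] with x hx
        simp [hx]
      rw [lintegral_congr_ae h, lintegral_zero]
    ext f
    simp only [Set.mem_setOf_eq, Set.mem_sep_iff]
    constructor
    · rintro ⟨hfF, hmin'⟩
      refine ⟨hfF, ?_⟩
      have h0 : ∫⁻ x, ENNReal.ofReal (R (f x) - c) ∂ν = 0 :=
        le_antisymm (hzero ▸ hmin' f₀ hf₀F) zero_le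
      have hmeas : Measurable fun x => ENNReal.ofReal (R (f x) - c) :=
        ENNReal.measurable_ofReal.comp ((hR.comp (hF f hfF)).sub measurable_const)
      have hae : ∀ᵐ x ∂ν, ENNReal.ofReal (R (f x) - c) = 0 :=
        (lintegral_eq_zero_iff hmeas).mp h0
      refine hμν.ae_le ?_
      filter_upwards [hae] with x hx
      have : R (f x) - c ≤ 0 := by
        by_contra hlt
        push_neg at hlt
        simp [ENNReal.ofReal_eq_zero, not_le.mpr hlt] at hx
      linarith [hc (f x)]
    · rintro ⟨hfF, hae⟩
      refine ⟨hfF, fun g hg => ?_⟩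
      have h0 : ∫⁻ x, ENNReal.ofReal (R (f x) - c) ∂ν = 0 := by
        have h : ∀ᵐ x ∂ν, ENNReal.ofReal (R (f x) - c) = 0 := by
          filter_upwards [hνμ.ae_le hae] with x hx
          simp [hx]
        rw [lintegral_congr_ae h, lintegral_zero]
      rw [h0]
      exact zero_le
  rw [key P hPμ hμP, key Q hQμ hμQ]
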